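/- Let H be a real Hilbert space and let A, B be continuous linear operators on H. Suppose there exist constants M, β > 0 such that ‖exp(tA)‖ ≤ M e^{−βt} for all t ≥ 0. Then the Bochner integral X := ∫₀^∞ exp(tA*) B exp(tA) dt converges in operator norm and satisfies the Lyapunov equation A*X + X A + B = 0. -/

import Mathlib

open MeasureTheory ContinuousLinearMap

set_option maxHeartbeats 1000000 in
set_option synthInstance.maxHeartbeats 400000 in
/-- If `exp(tA)` decays exponentially in operator norm, then the Bochner integral
`X = ∫₀^∞ exp(tA*) B exp(tA) dt` converges and solves the Lyapunov equation
`A*X + XA + B = 0`. -/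
theorem lyapunov_integral_solution
    {H : Type*} [NormedAddCommGroup H] [InnerProductSpace ℝ H] [CompleteSpace H]
    (A B : H →L[ℝ] H) (M β : ℝ) (hM : 0 < M) (hβ : 0 < β)
    (hdecay : ∀ t : ℝ, 0 ≤ t → ‖NormedSpace.exp (t • A)‖ ≤ M * Real.exp (-β * t)) :
    IntegrableOn
      (fun t : ℝ =>
        NormedSpace.exp (t • adjoint A) ∘L B ∘L NormedSpace.exp (t • A))
      (Set.Ici (0 : ℝ)) ∧
    adjoint A ∘L
        (∫ t in Set.Ici (0 : ℝ),
          NormedSpace.exp (t • adjoint A) ∘L B ∘L NormedSpace.exp (t • A)) +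
      (∫ t in Set.Ici (0 : ℝ),
          NormedSpace.exp (t • adjoint A) ∘L B ∘L NormedSpace.exp (t • A)) ∘L A +
      B = 0 := by
  set As := adjoint A with hAs
  set f : ℝ → (H →L[ℝ] H) := fun t =>
    NormedSpace.exp (t • As) ∘L B ∘L NormedSpace.exp (t • A) with hfdef
  have hfmul : ∀ t : ℝ, f t
      = NormedSpace.exp (t • As) * (B * NormedSpace.exp (t • A)) := fun t => rfl
  -- the adjoint exponential is the star of the exponential
  have hstar : ∀ t : ℝ, NormedSpace.exp (t • As) = star (NormedSpace.exp (t • A)) := by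
    intro t
    rw [NormedSpace.star_exp, star_smul, star_trivial, hAs, ← star_eq_adjoint]
  have hnorm_star : ∀ t : ℝ, ‖NormedSpace.exp (t • As)‖ = ‖NormedSpace.exp (t • A)‖ := by
    intro t; rw [hstar t]; exact norm_star (NormedSpace.exp (t • A))
  -- norm bound for f
  have hbound : ∀ t : ℝ, 0 ≤ t → ‖f t‖ ≤ M * M * ‖B‖ * Real.exp (-(2 * β) * t) := by
    intro t ht
    have h1 : ‖f t‖ ≤ ‖NormedSpace.exp (t • As)‖ * (‖B‖ * ‖NormedSpace.exp (t • A)‖) := by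
      rw [hfmul]
      exact le_trans (norm_mul_le _ _)
        (by gcongr; exact norm_mul_le _ _)
    have h2 := hdecay t ht
    have hE : (0:ℝ) < Real.exp (-β * t) := Real.exp_pos _
    calc ‖f t‖ ≤ ‖NormedSpace.exp (t • As)‖ * (‖B‖ * ‖NormedSpace.exp (t • A)‖) := h1
      _ ≤ (M * Real.exp (-β * t)) * (‖B‖ * (M * Real.exp (-β * t))) := by
          rw [hnorm_star]
          gcongr <;> first | exact h2 | positivity
      _ = M * M * ‖B‖ * Real.exp (-(2 * β) * t) := by
          rw [show -(2 * β) * t = -β * t + -β * t by ring, Real.exp_add]; ring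
  -- continuity of f
  have hcont : Continuous f := by
    have h1 : Continuous fun t : ℝ => NormedSpace.exp (t • As) :=
      (continuous_iff_continuousAt.2 fun x => (NormedSpace.exp_analytic (𝕂 := ℝ) x).continuousAt).comp (continuous_id.smul continuous_const)
    have h2 : Continuous fun t : ℝ => NormedSpace.exp (t • A) :=
      (continuous_iff_continuousAt.2 fun x => (NormedSpace.exp_analytic (𝕂 := ℝ) x).continuousAt).comp (continuous_id.smul continuous_const)
    simp only [hfdef]
    exact (h1.mul (continuous_const.mul h2) : _)
  -- integrability of the dominating function
  have hgInt : IntegrableOn (fun t : ℝ => M * M * ‖B‖ * Real.exp (-(2 * β) * t))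
      (Set.Ici (0 : ℝ)) := by
    have := exp_neg_integrableOn_Ioi (0 : ℝ) (b := 2 * β) (by positivity)
    rw [integrableOn_Ici_iff_integrableOn_Ioi]
    simpa [neg_mul, IntegrableOn] using this.const_mul (M * M * ‖B‖)
  -- integrability of f
  have hfInt : IntegrableOn f (Set.Ici (0 : ℝ)) := by
    refine hgInt.mono' (hcont.aestronglyMeasurable.restrict) ?_
    filter_upwards [ae_restrict_mem measurableSet_Ici] with t ht
    exact hbound t ht
  have hfIntIoi : IntegrableOn f (Set.Ioi (0 : ℝ)) :=
    hfInt.mono_set Set.Ioi_subset_Ici_self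
  -- derivative of f
  have hderiv : ∀ t : ℝ, HasDerivAt f (As * f t + f t * A) t := by
    intro t
    have h1 : HasDerivAt (fun u : ℝ => NormedSpace.exp (u • As))
        (As * NormedSpace.exp (t • As)) t := hasDerivAt_exp_smul_const' As t
    have h2 : HasDerivAt (fun u : ℝ => B * NormedSpace.exp (u • A))
        (B * (NormedSpace.exp (t • A) * A)) t :=
      (hasDerivAt_exp_smul_const A t).const_mul B
    have := h1.mul h2
    simp only [hfmul]
    exact this.congr_deriv (by simp only [mul_assoc])
  -- integrability of the derivative
  set L : (H →L[ℝ] H) →L[ℝ] (H →L[ℝ] H) :=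
    ContinuousLinearMap.mul ℝ (H →L[ℝ] H) As + (ContinuousLinearMap.mul ℝ (H →L[ℝ] H)).flip A
    with hL
  have hLapp : ∀ X : H →L[ℝ] H, L X = As * X + X * A := fun X => rfl
  have hf'Int : IntegrableOn (fun t => As * f t + f t * A) (Set.Ioi (0 : ℝ)) := by
    have := L.integrable_comp hfIntIoi
    simpa only [hLapp, IntegrableOn] using this
  -- limit at infinity
  have htend : Filter.Tendsto f Filter.atTop (nhds 0) := by
    have hg : Filter.Tendsto (fun t : ℝ => M * M * ‖B‖ * Real.exp (-(2 * β) * t))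
        Filter.atTop (nhds 0) := by
      have h1 : Filter.Tendsto (fun t : ℝ => -(2 * β) * t) Filter.atTop Filter.atBot :=
        (Filter.tendsto_const_mul_atBot_of_neg (by linarith)).mpr Filter.tendsto_id
      have h2 := Real.tendsto_exp_atBot.comp h1
      simpa using h2.const_mul (M * M * ‖B‖)
    refine squeeze_zero_norm' ?_ hg
    filter_upwards [Filter.eventually_ge_atTop (0 : ℝ)] with t ht
    exact hbound t ht
  -- fundamental theorem of calculus on [0, ∞)
  have hf0 : f 0 = B := by
    simp [hfdef, NormedSpace.exp_zero, ContinuousLinearMap.one_def]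
  have key : (∫ t in Set.Ioi (0 : ℝ), (As * f t + f t * A)) = 0 - f 0 :=
    integral_Ioi_of_hasDerivAt_of_tendsto (hcont.continuousWithinAt)
      (fun x _ => hderiv x) hf'Int htend
  -- split the integral
  have h1Int : IntegrableOn (fun t => As * f t) (Set.Ioi (0 : ℝ)) := by
    have := (ContinuousLinearMap.mul ℝ (H →L[ℝ] H) As).integrable_comp hfIntIoi
    simpa [IntegrableOn] using this
  have h2Int : IntegrableOn (fun t => f t * A) (Set.Ioi (0 : ℝ)) := by
    have := ((ContinuousLinearMap.mul ℝ (H →L[ℝ] H)).flip A).integrable_comp hfIntIoi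
    simpa [IntegrableOn] using this
  have hsplit : (∫ t in Set.Ioi (0 : ℝ), (As * f t + f t * A))
      = As * (∫ t in Set.Ioi (0 : ℝ), f t) + (∫ t in Set.Ioi (0 : ℝ), f t) * A := by
    rw [integral_add h1Int h2Int]
    congr 1
    · have := (ContinuousLinearMap.mul ℝ (H →L[ℝ] H) As).integral_comp_comm hfIntIoi
      simpa using this
    · have := ((ContinuousLinearMap.mul ℝ (H →L[ℝ] H)).flip A).integral_comp_comm hfIntIoi
      simpa using this
  refine ⟨hfInt, ?_⟩
  have hIci : (∫ t in Set.Ici (0 : ℝ), f t) = ∫ t in Set.Ioi (0 : ℝ), f t :=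
    integral_Ici_eq_integral_Ioi
  have hmain : As * (∫ t in Set.Ioi (0 : ℝ), f t) + (∫ t in Set.Ioi (0 : ℝ), f t) * A
      = -B := by
    rw [← hsplit, key, hf0, zero_sub]
  show As ∘L (∫ t in Set.Ici (0 : ℝ), f t) + (∫ t in Set.Ici (0 : ℝ), f t) ∘L A + B = 0
  rw [hIci]
  have : As ∘L (∫ t in Set.Ioi (0 : ℝ), f t) + (∫ t in Set.Ioi (0 : ℝ), f t) ∘L A
      = As * (∫ t in Set.Ioi (0 : ℝ), f t) + (∫ t in Set.Ioi (0 : ℝ), f t) * A := rfl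
  rw [this, hmain]
  simp
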